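/- The C-element equals the weave of two wires with common output: pref*[a?; c!] || pref*[b?; c!] = pref*[(a? || b?); c!], i.e., the weave of two trace structures each describing a wire with the same output symbol c yields the C-element trace structure whose traces are all prefixes of repetitions of (both a and b in either order, then c). -/

import Mathlib

/-- A trace structure: input alphabet, output alphabet, and a set of traces. -/
structure TraceStructure (α : Type*) where
  i : Set α
  o : Set α
  t : Set (List α)

namespace TraceStructure

variable {α : Type*}

/-- Total alphabet. -/
def alph (R : TraceStructure α) : Set α := R.i ∪ R.o

/-- Projection of a trace onto an alphabet: delete all symbols not in `A`. -/
noncomputable def projT (A : Set α) (w : List α) : List α :=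
  w.filter (fun x => @decide (x ∈ A) (Classical.propDecidable _))

/-- Reflection: swap input and output alphabets. -/
def reflect (R : TraceStructure α) : TraceStructure α := ⟨R.o, R.i, R.t⟩

/-- Weave of two trace structures. -/
noncomputable def weave (R S : TraceStructure α) : TraceStructure α :=
  ⟨R.i ∪ S.i, R.o ∪ S.o,
   {w | (∀ x ∈ w, x ∈ R.alph ∪ S.alph) ∧ projT R.alph w ∈ R.t ∧ projT S.alph w ∈ S.t}⟩

/-- Union of two trace structures. -/
def tsUnion (R S : TraceStructure α) : TraceStructure α :=
  ⟨R.i ∪ S.i, R.o ∪ S.o, R.t ∪ S.t⟩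

/-- Projection of a trace structure onto an alphabet `A`. -/
noncomputable def tsProj (R : TraceStructure α) (A : Set α) : TraceStructure α :=
  ⟨R.i ∩ A, R.o ∩ A, {w | ∃ u ∈ R.t, w = projT A u}⟩

/-- Prefix closure of a set of traces. -/
def prefSet (T : Set (List α)) : Set (List α) := {s | ∃ u, s ++ u ∈ T}

/-- Prefix closure of a trace structure. -/
def pref (R : TraceStructure α) : TraceStructure α := ⟨R.i, R.o, prefSet R.t⟩

/-- Kleene star (arbitrary repetition) of a set of traces. -/
def star (L : Set (List α)) : Set (List α) :=
  {w | ∃ ls : List (List α), (∀ u ∈ ls, u ∈ L) ∧ w = ls.flatten}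

/-- A set of traces is prefix-closed. -/
def PrefixClosed (T : Set (List α)) : Prop := ∀ s u : List α, s ++ u ∈ T → s ∈ T

/-- Rule R₀: no two consecutive transitions on the same wire. -/
def SatR0 (R : TraceStructure α) : Prop :=
  ∀ s ∈ R.t, ∀ x ∈ R.alph, s ++ [x, x] ∉ R.t

/-- Rule R₁: symbols of the same type commute. -/
def SatR1 (R : TraceStructure α) : Prop :=
  ∀ (s t : List α) (x y : α),
    ((x ∈ R.i ∧ y ∈ R.i) ∨ (x ∈ R.o ∧ y ∈ R.o)) →
    (s ++ [x, y] ++ t ∈ R.t ↔ s ++ [y, x] ++ t ∈ R.t)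

/-- Rule R₂′. -/
def SatR2' (R : TraceStructure α) : Prop :=
  ∀ (s t : List α) (x y z : α),
    ((x ∈ R.i ∧ z ∈ R.i ∧ y ∈ R.o) ∨ (x ∈ R.o ∧ z ∈ R.o ∧ y ∈ R.i)) →
    s ++ [x, y] ++ t ++ [z] ∈ R.t → s ++ [y, x] ++ t ∈ R.t →
    s ++ [y, x] ++ t ++ [z] ∈ R.t

/-- Rule R₃′ (synchronization class). -/
def SatR3' (R : TraceStructure α) : Prop :=
  ∀ (s : List α) (x y : α), x ≠ y → x ∈ R.alph → y ∈ R.alph →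
    s ++ [x] ∈ R.t → s ++ [y] ∈ R.t → s ++ [x, y] ∈ R.t

/-- Rule R₃′′ (data communication class). -/
def SatR3'' (R : TraceStructure α) : Prop :=
  ∀ (s : List α) (x y : α), x ≠ y → x ∈ R.alph → y ∈ R.alph →
    ¬(x ∈ R.i ∧ y ∈ R.i) →
    s ++ [x] ∈ R.t → s ++ [y] ∈ R.t → s ++ [x, y] ∈ R.t

/-- Rule R₃′′′ (arbitration class). -/
def SatR3''' (R : TraceStructure α) : Prop :=
  ∀ (s : List α) (x y : α),
    ((x ∈ R.i ∧ y ∈ R.o) ∨ (x ∈ R.o ∧ y ∈ R.i)) →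
    s ++ [x] ∈ R.t → s ++ [y] ∈ R.t → s ++ [x, y] ∈ R.t

/-- The WIRE component `pref *[a?; b!]`. -/
def wire (a b : α) : TraceStructure α :=
  ⟨{a}, {b}, prefSet (star {[a, b]})⟩

/-- The C-element `pref *[(a? || b?); c!]`. -/
def cElement (a b c : α) : TraceStructure α :=
  ⟨{a, b}, {c}, prefSet (star ({[a, b, c], [b, a, c]} : Set (List α)))⟩

/-- Interleaving (shuffle) of two traces. -/
inductive Interleave : List α → List α → List α → Prop
  | nil : Interleave [] [] []
  | left {x : α} {u v t : List α} : Interleave u v t → Interleave (x :: u) v (x :: t)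
  | right {x : α} {u v t : List α} : Interleave u v t → Interleave u (x :: v) (x :: t)

end TraceStructure

open TraceStructure

namespace CEAux

variable {α : Type*}

/-- Runs of the wire automaton: `x = true` means an `a` is pending (waiting for `c`). -/
inductive W (a c : α) : Bool → List α → Prop
  | nil (x) : W a c x []
  | consA {t} : W a c true t → W a c false (a :: t)
  | consC {t} : W a c false t → W a c true (c :: t)

/-- Runs of the C-element automaton: state records whether `a` resp. `b` is pending. -/
inductive Cw (a b c : α) : Bool → Bool → List α → Prop
  | nil (x y) : Cw a b c x y []
  | consA {y t} : Cw a b c true y t → Cw a b c false y (a :: t)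
  | consB {x t} : Cw a b c x true t → Cw a b c x false (b :: t)
  | consC {t} : Cw a b c false false t → Cw a b c true true (c :: t)

lemma projT_nil (A : Set α) : projT A ([] : List α) = [] := rfl

lemma projT_cons_mem {A : Set α} {x : α} (h : x ∈ A) (w : List α) :
    projT A (x :: w) = x :: projT A w := by
  simp only [projT, List.filter_cons]
  simp [h]

lemma projT_cons_not_mem {A : Set α} {x : α} (h : x ∉ A) (w : List α) :
    projT A (x :: w) = projT A w := by
  simp only [projT, List.filter_cons]
  simp [h]

lemma nil_mem_star (L : Set (List α)) : [] ∈ star L := ⟨[], by simp, rfl⟩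

lemma cons_mem_star {L : Set (List α)} {l v : List α} (hl : l ∈ L) (hv : v ∈ star L) :
    l ++ v ∈ star L := by
  obtain ⟨ls, h1, rfl⟩ := hv
  refine ⟨l :: ls, ?_, by simp⟩
  intro u hu
  rcases List.mem_cons.mp hu with rfl | hu
  · exact hl
  · exact h1 u hu

/-! ### Wire automaton vs wire trace set -/

lemma W_of_star {a c : α} {v : List α} (h : v ∈ star ({[a, c]} : Set (List α))) :
    W a c false v := by
  obtain ⟨ls, h1, rfl⟩ := h
  induction ls with
  | nil => exact W.nil _
  | cons l ls ih =>
    have hl : l = [a, c] := h1 l (by simp)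
    subst hl
    simpa using W.consA (W.consC (ih (fun u hu => h1 u (by simp [hu]))))

lemma W_prefix {a c : α} : ∀ (s u : List α) (x : Bool), W a c x (s ++ u) → W a c x s := by
  intro s
  induction s with
  | nil => intro u x _; exact W.nil x
  | cons z t ih =>
    intro u x h
    cases h with
    | consA h' => exact W.consA (ih u true h')
    | consC h' => exact W.consC (ih u false h')

lemma W_complete {a c : α} {x : Bool} {s : List α} (h : W a c x s) :
    if x then ∃ u, a :: (s ++ u) ∈ star ({[a, c]} : Set (List α))
    else ∃ u, s ++ u ∈ star ({[a, c]} : Set (List α)) := by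
  induction h with
  | nil x =>
    cases x with
    | false => exact ⟨[], nil_mem_star _⟩
    | true =>
      refine ⟨[c], ?_⟩
      simpa using cons_mem_star (show [a, c] ∈ ({[a, c]} : Set (List α)) from rfl) (nil_mem_star _)
  | consA h ih =>
    simp only [if_true, if_false] at *
    obtain ⟨u, hu⟩ := ih
    exact ⟨u, by simpa using hu⟩
  | consC h ih =>
    simp only [if_true, if_false] at *
    obtain ⟨u, hu⟩ := ih
    refine ⟨u, ?_⟩
    simpa using cons_mem_star (show [a, c] ∈ ({[a, c]} : Set (List α)) from rfl) hu

lemma W_iff {a c : α} (s : List α) :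
    W a c false s ↔ s ∈ prefSet (star ({[a, c]} : Set (List α))) := by
  constructor
  · intro h
    have := W_complete h
    simpa [prefSet] using this
  · rintro ⟨u, hu⟩
    exact W_prefix s u false (W_of_star hu)

/-! ### C-element automaton vs C-element trace set -/

lemma Cw_of_star {a b c : α} {v : List α}
    (h : v ∈ star ({[a, b, c], [b, a, c]} : Set (List α))) :
    Cw a b c false false v := by
  obtain ⟨ls, h1, rfl⟩ := h
  induction ls with
  | nil => exact Cw.nil _ _
  | cons l ls ih =>
    have ih' := ih (fun u hu => h1 u (by simp [hu]))
    rcases h1 l (by simp) with hl | hl <;> subst hl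
    · simpa using Cw.consA (Cw.consB (Cw.consC ih'))
    · simpa using Cw.consB (Cw.consA (Cw.consC ih'))

lemma Cw_prefix {a b c : α} :
    ∀ (s u : List α) (x y : Bool), Cw a b c x y (s ++ u) → Cw a b c x y s := by
  intro s
  induction s with
  | nil => intro u x y _; exact Cw.nil x y
  | cons z t ih =>
    intro u x y h
    cases h with
    | consA h' => exact Cw.consA (ih u _ _ h')
    | consB h' => exact Cw.consB (ih u _ _ h')
    | consC h' => exact Cw.consC (ih u _ _ h')

/-- Completion goal, depending on the state. -/
def CwGoal (a b c : α) (x y : Bool) (s : List α) : Prop :=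
  match x, y with
  | false, false => ∃ u, s ++ u ∈ star ({[a, b, c], [b, a, c]} : Set (List α))
  | true, false => ∃ u, a :: (s ++ u) ∈ star ({[a, b, c], [b, a, c]} : Set (List α))
  | false, true => ∃ u, b :: (s ++ u) ∈ star ({[a, b, c], [b, a, c]} : Set (List α))
  | true, true => ∃ u, a :: b :: (s ++ u) ∈ star ({[a, b, c], [b, a, c]} : Set (List α)) ∧
      b :: a :: (s ++ u) ∈ star ({[a, b, c], [b, a, c]} : Set (List α))

lemma Cw_complete {a b c : α} {x y : Bool} {s : List α} (h : Cw a b c x y s) :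
    CwGoal a b c x y s := by
  induction h with
  | nil x y =>
    cases x <;> cases y
    · exact ⟨[], nil_mem_star _⟩
    · exact ⟨[a, c], by simpa using cons_mem_star (show [b, a, c] ∈ ({[a, b, c], [b, a, c]} : Set (List α)) by simp) (nil_mem_star _)⟩
    · exact ⟨[b, c], by simpa using cons_mem_star (show [a, b, c] ∈ ({[a, b, c], [b, a, c]} : Set (List α)) by simp) (nil_mem_star _)⟩
    · exact ⟨[c], by
        constructor
        · simpa using cons_mem_star (show [a, b, c] ∈ ({[a, b, c], [b, a, c]} : Set (List α)) by simp) (nil_mem_star _)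
        · simpa using cons_mem_star (show [b, a, c] ∈ ({[a, b, c], [b, a, c]} : Set (List α)) by simp) (nil_mem_star _)⟩
  | @consA y t h ih =>
    cases y with
    | false =>
      obtain ⟨u, hu⟩ := ih
      exact ⟨u, by simpa using hu⟩
    | true =>
      obtain ⟨u, hu1, hu2⟩ := ih
      exact ⟨u, by simpa using hu2⟩
  | @consB x t h ih =>
    cases x with
    | false =>
      obtain ⟨u, hu⟩ := ih
      exact ⟨u, by simpa using hu⟩
    | true =>
      obtain ⟨u, hu1, hu2⟩ := ih
      exact ⟨u, by simpa using hu1⟩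
  | consC h ih =>
    obtain ⟨u, hu⟩ := ih
    refine ⟨u, ?_, ?_⟩
    · simpa using cons_mem_star (show [a, b, c] ∈ ({[a, b, c], [b, a, c]} : Set (List α)) by simp) hu
    · simpa using cons_mem_star (show [b, a, c] ∈ ({[a, b, c], [b, a, c]} : Set (List α)) by simp) hu

lemma Cw_iff {a b c : α} (s : List α) :
    Cw a b c false false s ↔ s ∈ prefSet (star ({[a, b, c], [b, a, c]} : Set (List α))) := by
  constructor
  · intro h
    exact Cw_complete h
  · rintro ⟨u, hu⟩
    exact Cw_prefix s u false false (Cw_of_star hu)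

lemma Cw_mem {a b c : α} {x y : Bool} {s : List α} (h : Cw a b c x y s) :
    ∀ z ∈ s, z = a ∨ z = b ∨ z = c := by
  induction h with
  | nil => simp
  | consA h ih =>
    intro z hz
    rcases List.mem_cons.mp hz with rfl | hz
    · exact Or.inl rfl
    · exact ih z hz
  | consB h ih =>
    intro z hz
    rcases List.mem_cons.mp hz with rfl | hz
    · exact Or.inr (Or.inl rfl)
    · exact ih z hz
  | consC h ih =>
    intro z hz
    rcases List.mem_cons.mp hz with rfl | hz
    · exact Or.inr (Or.inr rfl)
    · exact ih z hz

/-! ### Inversion lemmas -/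

lemma W_cons_a {a c : α} (hac : a ≠ c) {x : Bool} {t : List α} :
    W a c x (a :: t) ↔ x = false ∧ W a c true t := by
  constructor
  · intro h
    cases h with
    | consA h' => exact ⟨rfl, h'⟩
    | consC h' => exact absurd rfl hac
  · rintro ⟨rfl, h⟩; exact W.consA h

lemma W_cons_c {a c : α} (hac : a ≠ c) {x : Bool} {t : List α} :
    W a c x (c :: t) ↔ x = true ∧ W a c false t := by
  constructor
  · intro h
    cases h with
    | consA h' => exact absurd rfl hac
    | consC h' => exact ⟨rfl, h'⟩
  · rintro ⟨rfl, h⟩; exact W.consC h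

lemma Cw_cons_a {a b c : α} (hab : a ≠ b) (hac : a ≠ c) {x y : Bool} {t : List α} :
    Cw a b c x y (a :: t) ↔ x = false ∧ Cw a b c true y t := by
  constructor
  · intro h
    cases h with
    | consA h' => exact ⟨rfl, h'⟩
    | consB h' => exact absurd rfl hab
    | consC h' => exact absurd rfl hac
  · rintro ⟨rfl, h⟩; exact Cw.consA h

lemma Cw_cons_b {a b c : α} (hab : a ≠ b) (hbc : b ≠ c) {x y : Bool} {t : List α} :
    Cw a b c x y (b :: t) ↔ y = false ∧ Cw a b c x true t := by
  constructor
  · intro h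
    cases h with
    | consA h' => exact absurd rfl hab.symm
    | consB h' => exact ⟨rfl, h'⟩
    | consC h' => exact absurd rfl hbc
  · rintro ⟨rfl, h⟩; exact Cw.consB h

lemma Cw_cons_c {a b c : α} (hac : a ≠ c) (hbc : b ≠ c) {x y : Bool} {t : List α} :
    Cw a b c x y (c :: t) ↔ x = true ∧ y = true ∧ Cw a b c false false t := by
  constructor
  · intro h
    cases h with
    | consA h' => exact absurd rfl hac.symm
    | consB h' => exact absurd rfl hbc.symm
    | consC h' => exact ⟨rfl, rfl, h'⟩
  · rintro ⟨rfl, rfl, h⟩; exact Cw.consC h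

/-! ### The bridge -/

lemma bridge {a b c : α} (hab : a ≠ b) (hac : a ≠ c) (hbc : b ≠ c) :
    ∀ (s : List α), (∀ z ∈ s, z = a ∨ z = b ∨ z = c) →
    ∀ x y : Bool,
      (Cw a b c x y s ↔
        W a c x (projT ({a} ∪ {c} : Set α) s) ∧ W b c y (projT ({b} ∪ {c} : Set α) s)) := by
  intro s
  induction s with
  | nil =>
    intro _ x y
    simp only [projT_nil]
    exact ⟨fun _ => ⟨W.nil _, W.nil _⟩, fun _ => Cw.nil _ _⟩
  | cons z t ih =>
    intro hmem x y
    have hmt : ∀ z ∈ t, z = a ∨ z = b ∨ z = c := fun z hz => hmem z (List.mem_cons_of_mem _ hz)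
    rcases hmem z List.mem_cons_self with rfl | rfl | rfl
    · rw [projT_cons_mem (by simp) t, projT_cons_not_mem (by simp [hab, hac]) t,
        Cw_cons_a hab hac, W_cons_a hac]
      rw [ih hmt true y]
      tauto
    · rw [projT_cons_not_mem (by simp [Ne.symm hab, hbc]) t, projT_cons_mem (by simp) t,
        Cw_cons_b hab hbc, W_cons_a hbc]
      rw [ih hmt x true]
      tauto
    · rw [projT_cons_mem (by simp) t, projT_cons_mem (by simp) t,
        Cw_cons_c hac hbc, W_cons_c hac, W_cons_c hbc]
      rw [ih hmt false false]
      tauto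

end CEAux

open CEAux

theorem weave_wires_eq_cElement {α : Type*} (a b c : α)
    (hab : a ≠ b) (hac : a ≠ c) (hbc : b ≠ c) :
    weave (wire a c) (wire b c) = cElement a b c := by
  have hmk : ∀ (R S : TraceStructure α), R.i = S.i → R.o = S.o → R.t = S.t → R = S := by
    rintro ⟨⟩ ⟨⟩ rfl rfl rfl; rfl
  apply hmk
  · show ({a} ∪ {b} : Set α) = {a, b}
    rw [Set.singleton_union]
  · show ({c} ∪ {c} : Set α) = {c}
    simp
  · show {w | (∀ x ∈ w, x ∈ (wire a c).alph ∪ (wire b c).alph) ∧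
        projT (wire a c).alph w ∈ (wire a c).t ∧ projT (wire b c).alph w ∈ (wire b c).t} =
      prefSet (star ({[a, b, c], [b, a, c]} : Set (List α)))
    have halph1 : (wire a c).alph = ({a} ∪ {c} : Set α) := rfl
    have halph2 : (wire b c).alph = ({b} ∪ {c} : Set α) := rfl
    ext w
    simp only [Set.mem_setOf_eq, halph1, halph2]
    constructor
    · rintro ⟨hm, h1, h2⟩
      have hm' : ∀ z ∈ w, z = a ∨ z = b ∨ z = c := by
        intro z hz
        have := hm z hz
        simp only [Set.mem_union, Set.mem_singleton_iff] at this
        tauto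
      have hW1 : W a c false (projT ({a} ∪ {c} : Set α) w) := (W_iff _).mpr h1
      have hW2 : W b c false (projT ({b} ∪ {c} : Set α) w) := (W_iff _).mpr h2
      exact (Cw_iff w).mp ((bridge hab hac hbc w hm' false false).mpr ⟨hW1, hW2⟩)
    · intro h
      have hc : Cw a b c false false w := (Cw_iff w).mpr h
      have hm' := Cw_mem hc
      have := (bridge hab hac hbc w hm' false false).mp hc
      refine ⟨?_, (W_iff _).mp this.1, (W_iff _).mp this.2⟩
      intro z hz
      rcases hm' z hz with rfl | rfl | rfl <;> simp
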